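/- Let u, v : ℝ² → ℝ be C² functions satisfying u_x + v_x = √2 e^((u−v)/2) and u_y − v_y = √2 e^((u+v)/2). Then (u+v)_xy = e^u and (u−v)_xy = e^u; in particular both the sum relation u_xy = e^u and the difference relation v_xy = 0 follow simultaneously. -/

import Mathlib

open Real

/-- Partial derivative in the first (x) coordinate. -/
noncomputable def px (f : ℝ × ℝ → ℝ) (p : ℝ × ℝ) : ℝ := fderiv ℝ f p (1, 0)

/-- Partial derivative in the second (y) coordinate. -/
noncomputable def py (f : ℝ × ℝ → ℝ) (p : ℝ × ℝ) : ℝ := fderiv ℝ f p (0, 1)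

lemma exp_deriv_eval (w : ℝ × ℝ → ℝ) (hw : Differentiable ℝ w) (p e : ℝ × ℝ) :
    fderiv ℝ (fun q => Real.sqrt 2 * Real.exp (w q / 2)) p e =
      Real.sqrt 2 * (Real.exp (w p / 2) * (fderiv ℝ w p e / 2)) := by
  have hw2 : HasFDerivAt (fun q => w q / 2) ((2:ℝ)⁻¹ • fderiv ℝ w p) p := by
    simpa [div_eq_mul_inv] using (hw p).hasFDerivAt.mul_const ((2:ℝ)⁻¹)
  have h := (hw2.exp.const_mul (Real.sqrt 2)).fderiv
  rw [h]
  simp [ContinuousLinearMap.smul_apply, smul_eq_mul]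
  ring

theorem stmt19 (u v : ℝ × ℝ → ℝ) (hu : ContDiff ℝ 2 u) (hv : ContDiff ℝ 2 v)
    (h1 : ∀ p, px u p + px v p = Real.sqrt 2 * Real.exp ((u p - v p) / 2))
    (h2 : ∀ p, py u p - py v p = Real.sqrt 2 * Real.exp ((u p + v p) / 2)) :
    ∀ p, py (px (fun q => u q + v q)) p = Real.exp (u p) ∧
      py (px (fun q => u q - v q)) p = Real.exp (u p) ∧
      py (px u) p = Real.exp (u p) ∧
      py (px v) p = 0 := by
  intro p
  have hud : Differentiable ℝ u := hu.differentiable (by norm_num)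
  have hvd : Differentiable ℝ v := hv.differentiable (by norm_num)
  set f : ℝ × ℝ → ℝ := fun q => u q + v q with hf
  set g : ℝ × ℝ → ℝ := fun q => u q - v q with hg
  have hfd : Differentiable ℝ f := hud.add hvd
  have hgd : Differentiable ℝ g := hud.sub hvd
  have hgC : ContDiff ℝ 2 g := hu.sub hv
  have hfderivf : ∀ q, fderiv ℝ f q = fderiv ℝ u q + fderiv ℝ v q := fun q =>
    fderiv_add (hud q) (hvd q)
  have hfderivg : ∀ q, fderiv ℝ g q = fderiv ℝ u q - fderiv ℝ v q := fun q =>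
    fderiv_sub (hud q) (hvd q)
  -- px f = √2 exp(g/2)
  have hpxf : px f = fun q => Real.sqrt 2 * Real.exp (g q / 2) := by
    funext q
    rw [← h1 q]
    simp only [px, hfderivf q, ContinuousLinearMap.add_apply]
  -- py g = √2 exp(f/2)
  have hpyg : py g = fun q => Real.sqrt 2 * Real.exp (f q / 2) := by
    funext q
    rw [← h2 q]
    simp only [py, hfderivg q, ContinuousLinearMap.sub_apply]
  have sqrt2 : Real.sqrt 2 * Real.sqrt 2 = 2 := Real.mul_self_sqrt (by norm_num)
  have hexp : ∀ a b : ℝ, Real.sqrt 2 * (Real.exp (a / 2) * (Real.sqrt 2 * Real.exp (b / 2) / 2))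
      = Real.exp ((a + b) / 2) := by
    intro a b
    rw [show Real.sqrt 2 * (Real.exp (a / 2) * (Real.sqrt 2 * Real.exp (b / 2) / 2)) =
      (Real.sqrt 2 * Real.sqrt 2) / 2 * (Real.exp (a / 2) * Real.exp (b / 2)) by ring, sqrt2,
      ← Real.exp_add]
    ring_nf
  -- (u+v)_xy = e^u
  have key1 : py (px f) p = Real.exp (u p) := by
    rw [hpxf]
    show fderiv ℝ (fun q => Real.sqrt 2 * Real.exp (g q / 2)) p (0,1) = _
    rw [exp_deriv_eval g hgd p (0,1)]
    have h2' := h2 p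
    simp only [py] at h2'
    rw [hfderivg p]
    simp only [ContinuousLinearMap.sub_apply]
    rw [h2', hexp]
    rw [show (u p - v p + (u p + v p)) / 2 = u p by ring]
  -- (u-v)_yx = e^u
  have key2' : px (py g) p = Real.exp (u p) := by
    rw [hpyg]
    show fderiv ℝ (fun q => Real.sqrt 2 * Real.exp (f q / 2)) p (1,0) = _
    rw [exp_deriv_eval f hfd p (1,0)]
    have h1' := h1 p
    simp only [px] at h1'
    rw [hfderivf p]
    simp only [ContinuousLinearMap.add_apply]
    rw [h1', hexp]
    rw [show (u p + v p + (u p - v p)) / 2 = u p by ring]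
  -- swap order of derivatives for g
  have hdg : DifferentiableAt ℝ (fderiv ℝ g) p :=
    ((hgC.fderiv_right (m := 1) (by norm_num)).differentiable (by norm_num)).differentiableAt
  have swap_eval : ∀ e w : ℝ × ℝ,
      fderiv ℝ (fun q => fderiv ℝ g q w) p e = fderiv ℝ (fderiv ℝ g) p e w := by
    intro e w
    rw [fderiv_clm_apply hdg (differentiableAt_const w)]
    simp
  have hsymm : IsSymmSndFDerivAt ℝ g p := hgC.contDiffAt.isSymmSndFDerivAt (by norm_num)
  have key2 : py (px g) p = Real.exp (u p) := by
    have e1 : py (px g) p = fderiv ℝ (fun q => fderiv ℝ g q (1,0)) p (0,1) := rfl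
    have e2 : px (py g) p = fderiv ℝ (fun q => fderiv ℝ g q (0,1)) p (1,0) := rfl
    rw [e1, swap_eval (0,1) (1,0), hsymm (0,1) (1,0), ← swap_eval (1,0) (0,1), ← e2]
    exact key2'
  -- split into u and v parts
  have hpxu : DifferentiableAt ℝ (px u) p := by
    have h : ContDiff ℝ 1 (fderiv ℝ u) := hu.fderiv_right (by norm_num)
    exact ((h.differentiable (by norm_num)).clm_apply (differentiable_const _)).differentiableAt
  have hpxv : DifferentiableAt ℝ (px v) p := by
    have h : ContDiff ℝ 1 (fderiv ℝ v) := hv.fderiv_right (by norm_num)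
    exact ((h.differentiable (by norm_num)).clm_apply (differentiable_const _)).differentiableAt
  have hsum : py (px f) p = py (px u) p + py (px v) p := by
    have he : px f = fun q => px u q + px v q := by
      funext q
      simp only [px, hfderivf q, ContinuousLinearMap.add_apply]
    rw [he, py, fderiv_fun_add hpxu hpxv, ContinuousLinearMap.add_apply]; rfl
  have hdiff : py (px g) p = py (px u) p - py (px v) p := by
    have he : px g = fun q => px u q - px v q := by
      funext q
      simp only [px, hfderivg q, ContinuousLinearMap.sub_apply]
    rw [he, py, fderiv_fun_sub hpxu hpxv, ContinuousLinearMap.sub_apply]; rfl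
  exact ⟨key1, key2, by linarith, by linarith⟩
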